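/- arXiv:1307.2066 — 2 statements merged into one kernel-verified Lean document; each statement's English description precedes it below -/
import Mathlib

section
/- There is an absolute constant $C$ with the following property. Let $s \ge 2$ be an integer and let $\mathcal{P}$ be a finite nonempty set of primes such that $\gcd(s, p-1) > 1$ for every $p \in \mathcal{P}$; put $P = |\mathcal{P}|$. For each $p \in \mathcal{P}$ let $\chi_p$ be a non-principal Dirichlet character modulo $p$ with $\chi_p^s$ equal to the principal character (so that $\chi_p(n^s) = 1$ whenever $p \nmid n$). Let $w : \mathbb{N} \to [0,\infty)$ satisfy $\sum_{n} w(n) < \infty$, $w(0) = 0$, and $w(n) = 0$ for all $n \ge e^{P}$. Then $\sum_{n=1}^{\infty} w(n^s) \le C \left( P^{-1} \sum_{n=1}^{\infty} w(n) + P^{-2} \sum_{\substack{p, q \in \mathcal{P} \\ p \ne q}} \left| \sum_{n=1}^{\infty} w(n) \chi_p(n) \overline{\chi_q(n)} \right| \right)$. -/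
lemma aux_sum_char (s : ℕ) (hs : s ≠ 0) (P : Finset ℕ) (hPp : ∀ p ∈ P, p.Prime)
    (χ : (p : ℕ) → DirichletCharacter ℂ p) (hχs : ∀ p ∈ P, (χ p) ^ s = 1) (m : ℕ) :
    ∑ p ∈ P, χ p ((m ^ s : ℕ) : ZMod p) =
      ((P.filter (fun p => ¬ p ∣ m)).card : ℂ) := by
  classical
  rw [Finset.card_filter, Nat.cast_sum]
  refine Finset.sum_congr rfl fun p hp => ?_
  have hp' := hPp p hp
  haveI : Fact p.Prime := ⟨hp'⟩
  rw [Nat.cast_pow]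
  by_cases hd : p ∣ m
  · have h0 : (m : ZMod p) = 0 := (ZMod.natCast_eq_zero_iff m p).mpr hd
    rw [h0, zero_pow hs, MulChar.map_nonunit _ not_isUnit_zero]
    simp [hd]
  · have hu : IsUnit (m : ZMod p) := by
      have hne : (m : ZMod p) ≠ 0 := by
        simpa [ZMod.natCast_eq_zero_iff] using hd
      exact isUnit_iff_ne_zero.mpr hne
    rw [map_pow, ← MulChar.pow_apply' _ hs, hχs p hp, MulChar.one_apply hu]
    simp [hd]

lemma aux_card (s : ℕ) (hs : 2 ≤ s) (P : Finset ℕ) (hPp : ∀ p ∈ P, p.Prime)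
    (m : ℕ) (hm : 1 ≤ m) (hlt : ((m ^ s : ℕ) : ℝ) < Real.exp P.card) :
    (1 - 1/(2*Real.log 2)) * P.card ≤ ((P.filter (fun p => ¬ p ∣ m)).card : ℝ) := by
  classical
  set B := P.filter (fun p => p ∣ m) with hB
  have hsplit : (P.filter (fun p => ¬ p ∣ m)).card = P.card - B.card := by
    have h : B.card + (P.filter (fun p => ¬ p ∣ m)).card = P.card := by
      simpa using Finset.card_filter_add_card_filter_not (s := P) (p := fun p => p ∣ m)
    omega
  have hBle : B.card ≤ P.card := Finset.card_le_card (Finset.filter_subset _ _)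
  -- 2 ^ B.card ≤ m
  have hdvd : (∏ p ∈ B, p) ∣ m := by
    refine Finset.prod_primes_dvd m ?_ ?_
    · intro p hp
      exact (hPp p (Finset.mem_of_mem_filter p hp)).prime
    · intro p hp
      exact (Finset.mem_filter.mp hp).2
  have hpow : 2 ^ B.card ≤ m := by
    calc 2 ^ B.card ≤ ∏ p ∈ B, p := by
          refine Finset.pow_card_le_prod _ _ _ fun p hp => ?_
          exact (hPp p (Finset.mem_of_mem_filter p hp)).two_le
      _ ≤ m := Nat.le_of_dvd hm hdvd
  have hlog2 : (0.6931471803 : ℝ) < Real.log 2 := Real.log_two_gt_d9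
  have h2l : (0:ℝ) < 2 * Real.log 2 := by nlinarith
  -- log m < P.card / 2
  have hmpos : (0:ℝ) < (m : ℝ) := by exact_mod_cast hm
  have hlogm : (s : ℝ) * Real.log m < P.card := by
    have h1 : Real.log ((m : ℝ) ^ s) < P.card := by
      rw [Real.log_lt_iff_lt_exp (by positivity)]
      calc ((m : ℝ)) ^ s = ((m ^ s : ℕ) : ℝ) := by push_cast; ring
        _ < Real.exp P.card := hlt
    rwa [Real.log_pow] at h1
  have hlogm0 : 0 ≤ Real.log m := Real.log_natCast_nonneg m
  have hs2 : (2:ℝ) ≤ (s:ℝ) := by exact_mod_cast hs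
  have hlogm2 : 2 * Real.log m < P.card := by nlinarith
  -- B.card * log 2 ≤ log m
  have hBlog : (B.card : ℝ) * Real.log 2 ≤ Real.log m := by
    have h1 : ((2:ℝ)) ^ B.card ≤ (m : ℝ) := by exact_mod_cast hpow
    have h2 := Real.log_le_log (by positivity) h1
    rwa [Real.log_pow] at h2
  have hcast : ((P.filter (fun p => ¬ p ∣ m)).card : ℝ) = (P.card : ℝ) - B.card := by
    rw [hsplit, Nat.cast_sub hBle]
  rw [hcast, sub_mul, one_mul]
  have hkey : (B.card : ℝ) ≤ 1 / (2 * Real.log 2) * P.card := by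
    rw [one_div, inv_mul_eq_div, le_div_iff₀ h2l]
    nlinarith
  linarith




theorem stmt_1 :
    ∃ C : ℝ, 0 < C ∧
      ∀ (s : ℕ), 2 ≤ s →
      ∀ (P : Finset ℕ), P.Nonempty →
      (∀ p ∈ P, p.Prime) →
      (∀ p ∈ P, 1 < Nat.gcd s (p - 1)) →
      ∀ (χ : (p : ℕ) → DirichletCharacter ℂ p),
      (∀ p ∈ P, χ p ≠ 1) →
      (∀ p ∈ P, (χ p) ^ s = 1) →
      ∀ (w : ℕ → ℝ), (∀ n, 0 ≤ w n) → Summable w → w 0 = 0 →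
      (∀ n : ℕ, Real.exp P.card ≤ (n : ℝ) → w n = 0) →
      ∑' n : ℕ, w (n ^ s) ≤
        C * ((P.card : ℝ)⁻¹ * ∑' n : ℕ, w n +
          ((P.card : ℝ) ^ 2)⁻¹ *
            ∑ p ∈ P, ∑ q ∈ P.erase p,
              ‖∑' n : ℕ, (w n : ℂ) * χ p (n : ZMod p) *
                (starRingEnd ℂ) (χ q (n : ZMod q))‖) := by
  classical
  have hlog2 : (0.6931471803 : ℝ) < Real.log 2 := Real.log_two_gt_d9
  set c : ℝ := 1 - 1/(2*Real.log 2) with hcdef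
  have h2l : (0:ℝ) < 2 * Real.log 2 := by nlinarith
  have hc : 0 < c := by
    rw [hcdef, sub_pos, div_lt_one h2l]; nlinarith
  refine ⟨(c^2)⁻¹, inv_pos.mpr (pow_pos hc 2), ?_⟩
  intro s hs P hPne hPp hgcd χ hχne hχs w hw0 hwsum hw00 hwN
  have hs0 : s ≠ 0 := by omega
  set Pc : ℝ := (P.card : ℝ) with hPcdef
  have hPc1 : (1:ℝ) ≤ Pc := by
    have h01 : 1 ≤ P.card := hPne.card_pos
    rw [hPcdef]
    exact_mod_cast h01
  have hPc0 : (0:ℝ) < Pc := lt_of_lt_of_le one_pos hPc1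
  set N : ℕ := ⌈Real.exp Pc⌉₊ with hNdef
  have hNreal : Real.exp Pc ≤ (N:ℝ) := Nat.le_ceil _
  have hwN' : ∀ n, N ≤ n → w n = 0 := by
    intro n hn
    exact hwN n (le_trans hNreal (by exact_mod_cast hn))
  set M : ℕ := N ^ s + 1 with hMdef
  have hNM : N ≤ M := le_trans (Nat.le_self_pow hs0 N) (Nat.le_succ _)
  set T : ℕ → ℂ := fun m => ∑ p ∈ P, χ p (m : ZMod p) with hTdef
  set S : ℕ → ℕ → ℂ := fun p q => ∑ m ∈ Finset.range M,
    (w m : ℂ) * χ p (m : ZMod p) * (starRingEnd ℂ) (χ q (m : ZMod q)) with hSdef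
  -- rewrite tsums as finite sums
  have h1 : ∑' n : ℕ, w (n ^ s) = ∑ n ∈ Finset.range N, w (n ^ s) := by
    refine tsum_eq_sum fun n hn => ?_
    have hNn : N ≤ n := by simpa using hn
    exact hwN' _ (le_trans hNn (Nat.le_self_pow hs0 n))
  have h2 : ∑' n : ℕ, w n = ∑ n ∈ Finset.range N, w n :=
    tsum_eq_sum fun n hn => hwN' n (by simpa using hn)
  have h3 : ∀ p q : ℕ,
      (∑' n : ℕ, (w n : ℂ) * χ p (n : ZMod p) * (starRingEnd ℂ) (χ q (n : ZMod q))) = S p q := by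
    intro p q
    refine tsum_eq_sum fun n hn => ?_
    have : w n = 0 := hwN' n (le_trans hNM (by simpa using hn))
    simp [this]
  -- key pointwise bound
  have hkey : ∀ n ∈ Finset.range N,
      (c * Pc)^2 * w (n ^ s) ≤ w (n ^ s) * (norm (T (n ^ s)))^2 := by
    intro n _
    by_cases hzero : w (n ^ s) = 0
    · simp [hzero]
    have hn1 : 1 ≤ n := by
      rcases Nat.eq_zero_or_pos n with h | h
      · exact absurd (by rw [h, zero_pow hs0]; exact hw00) hzero
      · exact h
    have hlt : ((n ^ s : ℕ) : ℝ) < Real.exp Pc := by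
      by_contra hcon
      exact hzero (hwN _ (le_of_not_gt hcon))
    have hcard := aux_card s hs P hPp n hn1 hlt
    have habs : norm (T (n ^ s)) = ((P.filter (fun p => ¬ p ∣ n)).card : ℝ) := by
      simp only [hTdef]
      rw [aux_sum_char s hs0 P hPp χ hχs n, Complex.norm_natCast]
    have hcPc : 0 ≤ c * Pc := (mul_pos hc hPc0).le
    have h4 : c * Pc ≤ norm (T (n ^ s)) := by rw [habs]; exact hcard
    have h5 : (c*Pc)^2 ≤ (norm (T (n ^ s)))^2 := pow_le_pow_left₀ hcPc h4 2
    have h6 := mul_le_mul_of_nonneg_right h5 (hw0 (n^s))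
    linarith [h6, mul_comm (w (n^s)) ((norm (T (n^s)))^2)]
  have step1 : (c*Pc)^2 * ∑ n ∈ Finset.range N, w (n^s)
      ≤ ∑ n ∈ Finset.range N, w (n^s) * (norm (T (n^s)))^2 := by
    rw [Finset.mul_sum]; exact Finset.sum_le_sum hkey
  have step2 : ∑ n ∈ Finset.range N, w (n^s) * (norm (T (n^s)))^2
      ≤ ∑ m ∈ Finset.range M, w m * (norm (T m))^2 := by
    have himg : ∑ m ∈ (Finset.range N).image (· ^ s), w m * (norm (T m))^2
        = ∑ n ∈ Finset.range N, w (n^s) * (norm (T (n^s)))^2 :=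
      Finset.sum_image (fun x _ y _ h => Nat.pow_left_injective hs0 h)
    rw [← himg]
    refine Finset.sum_le_sum_of_subset_of_nonneg ?_ ?_
    · intro m hm
      simp only [Finset.mem_image, Finset.mem_range] at hm ⊢
      obtain ⟨n, hn, rfl⟩ := hm
      have : n ^ s ≤ N ^ s := Nat.pow_le_pow_left (le_of_lt hn) s
      omega
    · intro m _ _; exact mul_nonneg (hw0 m) (by positivity)
  have hterm : ∀ m : ℕ, (w m : ℂ) * T m * (starRingEnd ℂ) (T m)
      = (w m : ℂ) * (norm (T m) : ℂ)^2 := by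
    intro m
    rw [mul_assoc, Complex.mul_conj, Complex.normSq_eq_norm_sq]
    push_cast
    ring
  have hdouble : ∑ m ∈ Finset.range M, (w m : ℂ) * T m * (starRingEnd ℂ) (T m)
      = ∑ p ∈ P, ∑ q ∈ P, S p q := by
    have hm : ∀ m : ℕ, (w m : ℂ) * T m * (starRingEnd ℂ) (T m)
        = ∑ p ∈ P, ∑ q ∈ P,
          (w m : ℂ) * χ p (m : ZMod p) * (starRingEnd ℂ) (χ q (m : ZMod q)) := by
      intro m
      have hTT : T m * (starRingEnd ℂ) (T m)
          = ∑ p ∈ P, ∑ q ∈ P, (χ p (m : ZMod p)) * (starRingEnd ℂ) (χ q (m : ZMod q)) := by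
        simp only [hTdef, map_sum]
        exact Finset.sum_mul_sum _ _ _ _
      rw [mul_assoc, hTT, Finset.mul_sum]
      refine Finset.sum_congr rfl fun p _ => ?_
      rw [Finset.mul_sum]
      refine Finset.sum_congr rfl fun q _ => ?_
      ring
    rw [Finset.sum_congr rfl fun m _ => hm m]
    rw [Finset.sum_comm]
    refine Finset.sum_congr rfl fun p _ => ?_
    rw [Finset.sum_comm]
  have hsum_nonneg : 0 ≤ ∑ m ∈ Finset.range M, w m * (norm (T m))^2 :=
    Finset.sum_nonneg fun m _ => mul_nonneg (hw0 m) (by positivity)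
  have step3 : ∑ m ∈ Finset.range M, w m * (norm (T m))^2
      ≤ ∑ p ∈ P, ∑ q ∈ P, norm (S p q) := by
    have e1 : ((∑ m ∈ Finset.range M, w m * (norm (T m))^2 : ℝ) : ℂ)
        = ∑ p ∈ P, ∑ q ∈ P, S p q := by
      rw [← hdouble]
      push_cast
      exact Finset.sum_congr rfl fun m _ => (hterm m).symm
    have e2 : ∑ m ∈ Finset.range M, w m * (norm (T m))^2
        = norm (∑ p ∈ P, ∑ q ∈ P, S p q) := by
      rw [← e1, Complex.norm_real, Real.norm_of_nonneg hsum_nonneg]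
    rw [e2]
    calc norm (∑ p ∈ P, ∑ q ∈ P, S p q)
        ≤ ∑ p ∈ P, norm (∑ q ∈ P, S p q) := norm_sum_le _ _
      _ ≤ ∑ p ∈ P, ∑ q ∈ P, norm (S p q) :=
          Finset.sum_le_sum fun p _ => norm_sum_le _ _
  have hwMN : ∑ m ∈ Finset.range M, w m = ∑ n ∈ Finset.range N, w n := by
    symm
    refine Finset.sum_subset (Finset.range_subset_range.mpr hNM) ?_
    intro m _ hm
    exact hwN' m (by simpa using hm)
  have hdiag : ∀ p ∈ P, norm (S p p) ≤ ∑ n ∈ Finset.range N, w n := by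
    intro p _
    rw [← hwMN]
    simp only [hSdef]
    calc norm (∑ m ∈ Finset.range M,
          (w m : ℂ) * χ p (m : ZMod p) * (starRingEnd ℂ) (χ p (m : ZMod p)))
        ≤ ∑ m ∈ Finset.range M, norm
          ((w m : ℂ) * χ p (m : ZMod p) * (starRingEnd ℂ) (χ p (m : ZMod p))) :=
          norm_sum_le _ _
      _ ≤ ∑ m ∈ Finset.range M, w m := by
          refine Finset.sum_le_sum fun m _ => ?_
          rw [norm_mul, norm_mul, Complex.norm_real, Real.norm_of_nonneg (hw0 m), Complex.norm_conj]
          have hle : norm ((χ p) (m : ZMod p)) ≤ 1 := by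
            exact DirichletCharacter.norm_le_one _ _
          have ha : norm ((χ p) ((m : ℕ) : ZMod p)) * norm ((χ p) ((m : ℕ) : ZMod p)) ≤ 1 :=
            mul_le_one₀ hle (norm_nonneg _) hle
          nlinarith [hw0 m, ha]
  have hsplit2 : ∑ p ∈ P, ∑ q ∈ P, norm (S p q)
      ≤ Pc * (∑ n ∈ Finset.range N, w n)
        + ∑ p ∈ P, ∑ q ∈ P.erase p, norm (S p q) := by
    have hsum : ∀ p ∈ P, ∑ q ∈ P, norm (S p q)
        = norm (S p p) + ∑ q ∈ P.erase p, norm (S p q) :=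
      fun p hp => (Finset.add_sum_erase P _ hp).symm
    rw [Finset.sum_congr rfl hsum, Finset.sum_add_distrib]
    have hD : ∑ p ∈ P, norm (S p p) ≤ ∑ p ∈ P, ∑ n ∈ Finset.range N, w n :=
      Finset.sum_le_sum hdiag
    rw [Finset.sum_const, nsmul_eq_mul] at hD
    linarith
  -- assemble
  rw [h1, h2]
  have hgoalsum : ∑ p ∈ P, ∑ q ∈ P.erase p,
      norm (∑' n : ℕ, (w n:ℂ) * χ p (n : ZMod p) * (starRingEnd ℂ) (χ q (n : ZMod q)))
      = ∑ p ∈ P, ∑ q ∈ P.erase p, norm (S p q) :=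
    Finset.sum_congr rfl fun p _ => Finset.sum_congr rfl fun q _ => by rw [h3]
  rw [hgoalsum]
  set A := ∑ n ∈ Finset.range N, w (n^s) with hAdef
  set W := ∑ n ∈ Finset.range N, w n with hWdef
  set D := ∑ p ∈ P, ∑ q ∈ P.erase p, norm (S p q) with hDdef
  have htotal : (c*Pc)^2 * A ≤ Pc * W + D := le_trans step1 (le_trans step2 (le_trans step3 hsplit2))
  have hpos : (0:ℝ) < (c*Pc)^2 := pow_pos (mul_pos hc hPc0) 2
  have hPcne : Pc ≠ 0 := ne_of_gt hPc0
  have h' : A ≤ (Pc * W + D) / (c*Pc)^2 :=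
    (le_div_iff₀ hpos).mpr (by linarith [htotal, mul_comm A ((c*Pc)^2)])
  refine h'.trans_eq ?_
  have hPi : Pc * (Pc^2)⁻¹ = Pc⁻¹ := by
    rw [sq, mul_inv, ← mul_assoc, mul_inv_cancel₀ hPcne, one_mul]
  calc (Pc*W+D)/(c*Pc)^2 = (c^2)⁻¹ * ((Pc*(Pc^2)⁻¹) * W + (Pc^2)⁻¹ * D) := by
        rw [mul_pow, div_eq_mul_inv, mul_inv]; ring
    _ = (c^2)⁻¹ * (Pc⁻¹ * W + (Pc^2)⁻¹ * D) := by rw [hPi]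
end

section
/- For a positive integer $u$, let $w(u) = \prod_{p \| u} p$ denote the product of the primes dividing $u$ exactly once (i.e. primes $p$ with $p \mid u$ but $p^2 \nmid u$). Then for every $\epsilon$ with $0 < \epsilon < 1/2$ there is a constant $C = C(\epsilon)$ such that for all real $U \ge 1$, $\sum_{U < u \le 2U} w(u)^{-1/2 + \epsilon} \le C\, U^{1/2 + \epsilon}$. -/
/-- The product of the primes dividing `u` exactly once. -/
def wpart (u : ℕ) : ℕ :=
  ∏ p ∈ u.primeFactors.filter (fun p => u.factorization p = 1), p

def apart (u : ℕ) : ℕ :=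
  u.factorization.prod fun p e => p ^ (if e = 1 then 0 else if Odd e then (e - 3) / 2 else e / 2)

def bpart (u : ℕ) : ℕ :=
  u.factorization.prod fun p e => p ^ (if Odd e ∧ e ≠ 1 then 1 else 0)

lemma wpart_eq (u : ℕ) :
    wpart u = u.factorization.prod fun p e => p ^ (if e = 1 then 1 else 0) := by
  unfold wpart
  rw [Finsupp.prod, ← Nat.support_factorization, Finset.prod_filter]
  apply Finset.prod_congr rfl
  intro p _
  split <;> simp

lemma decomp (u : ℕ) (hu : u ≠ 0) : wpart u * (apart u ^ 2 * bpart u ^ 3) = u := by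
  conv_rhs => rw [← Nat.factorization_prod_pow_eq_self hu]
  rw [wpart_eq]
  unfold apart bpart
  rw [Finsupp.prod, Finsupp.prod, Finsupp.prod, Finsupp.prod,
    ← Finset.prod_pow, ← Finset.prod_pow, ← Finset.prod_mul_distrib,
    ← Finset.prod_mul_distrib]
  apply Finset.prod_congr rfl
  intro p hp
  have he : u.factorization p ≠ 0 := Finsupp.mem_support_iff.mp hp
  set e := u.factorization p with hedef
  rw [← pow_mul, ← pow_mul, ← pow_add, ← pow_add]
  congr 1
  rcases Nat.even_or_odd e with h | h
  · have h1 : ¬ Odd e := Nat.not_odd_iff_even.mpr h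
    have h2 : e % 2 = 0 := Nat.even_iff.mp h
    have h3 : e ≠ 1 := by omega
    simp only [if_neg h3, if_neg h1, if_neg (by tauto : ¬ (Odd e ∧ e ≠ 1))]
    omega
  · have h1 : Odd e := h
    have h2 : e % 2 = 1 := Nat.odd_iff.mp h
    by_cases h3 : e = 1
    · simp [h3]
    · simp only [if_neg h3, if_pos h1, if_pos (⟨h1, h3⟩ : Odd e ∧ e ≠ 1)]
      omega

lemma wpart_pos (u : ℕ) : 0 < wpart u := by
  unfold wpart
  apply Finset.prod_pos
  intro p hp
  exact (Nat.prime_of_mem_primeFactors (Finset.mem_filter.mp hp).1).pos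

lemma apart_pos (u : ℕ) : 0 < apart u := by
  unfold apart
  rw [Finsupp.prod]
  apply Finset.prod_pos
  intro p hp
  exact pow_pos (Nat.prime_of_mem_primeFactors (by rwa [Nat.support_factorization] at hp)).pos _

lemma bpart_pos (u : ℕ) : 0 < bpart u := by
  unfold bpart
  rw [Finsupp.prod]
  apply Finset.prod_pos
  intro p hp
  exact pow_pos (Nat.prime_of_mem_primeFactors (by rwa [Nat.support_factorization] at hp)).pos _

theorem stmt_11 (ε : ℝ) (hε0 : 0 < ε) (hε : ε < 1 / 2) :
    ∃ C : ℝ, 0 < C ∧ ∀ U : ℝ, 1 ≤ U →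
      ∑ u ∈ Finset.Ioc ⌊U⌋₊ ⌊2 * U⌋₊, (wpart u : ℝ) ^ (-(1 : ℝ) / 2 + ε) ≤
        C * U ^ ((1 : ℝ) / 2 + ε) := by
  have hsum1 : Summable (fun a : ℕ => (a : ℝ) ^ (2 * ((1/2 - ε) - 1))) := by
    rw [Real.summable_nat_rpow]; linarith
  have hsum2 : Summable (fun b : ℕ => (b : ℝ) ^ (3 * ((1/2 - ε) - 1))) := by
    rw [Real.summable_nat_rpow]; linarith
  set s : ℝ := 1/2 - ε with hsdef
  set q1 : ℝ := 2 * (s - 1) with hq1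
  set q2 : ℝ := 3 * (s - 1) with hq2
  set Z₁ : ℝ := ∑' a : ℕ, (a : ℝ) ^ q1 with hZ1
  set Z₂ : ℝ := ∑' b : ℕ, (b : ℝ) ^ q2 with hZ2
  have hZ₁0 : 0 ≤ Z₁ := tsum_nonneg fun a => Real.rpow_nonneg (Nat.cast_nonneg a) _
  have hZ₂0 : 0 ≤ Z₂ := tsum_nonneg fun b => Real.rpow_nonneg (Nat.cast_nonneg b) _
  have hs0 : 0 < s := by rw [hsdef]; linarith
  refine ⟨max 1 (2 * (Z₁ * Z₂)), lt_of_lt_of_le one_pos (le_max_left _ _), fun U hU => ?_⟩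
  have hU0 : (0:ℝ) < U := lt_of_lt_of_le one_pos hU
  set N := ⌊2 * U⌋₊ with hNdef
  set A := Finset.Icc 1 N with hA
  -- basic facts about u in the range
  have hu_facts : ∀ u ∈ Finset.Ioc ⌊U⌋₊ N, u ≠ 0 ∧ U < (u : ℝ) ∧ u ≤ N := by
    intro u hu
    obtain ⟨h1, h2⟩ := Finset.mem_Ioc.mp hu
    refine ⟨by omega, ?_, h2⟩
    have h4 : U < (⌊U⌋₊ : ℝ) + 1 := Nat.lt_floor_add_one U
    have h5 : (⌊U⌋₊ : ℝ) + 1 ≤ (u : ℝ) := by exact_mod_cast h1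
    linarith
  -- pointwise bound
  have key : ∀ u ∈ Finset.Ioc ⌊U⌋₊ N,
      (wpart u : ℝ) ^ (-(1:ℝ)/2 + ε) ≤
        U ^ (-s) * ((apart u ^ 2 * bpart u ^ 3 : ℕ) : ℝ) ^ s := by
    intro u hu
    obtain ⟨hu0, hUu, huN⟩ := hu_facts u hu
    set m : ℕ := apart u ^ 2 * bpart u ^ 3 with hm
    have hm0 : (0:ℝ) < (m : ℝ) := by
      have : 0 < m := Nat.mul_pos (pow_pos (apart_pos u) 2) (pow_pos (bpart_pos u) 3)
      exact_mod_cast this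
    have hwm : (wpart u : ℝ) = (u : ℝ) / (m : ℝ) := by
      rw [eq_div_iff (ne_of_gt hm0)]
      exact_mod_cast decomp u hu0
    have hexp : -(1:ℝ)/2 + ε = -s := by rw [hsdef]; ring
    rw [hexp, hwm, Real.div_rpow (by positivity) hm0.le, Real.rpow_neg hm0.le,
      div_inv_eq_mul]
    apply mul_le_mul_of_nonneg_right _ (Real.rpow_nonneg hm0.le _)
    exact Real.rpow_le_rpow_of_nonpos hU0 hUu.le (by linarith)
  -- the image set
  have hsumF : ∑ u ∈ Finset.Ioc ⌊U⌋₊ N, ((apart u ^ 2 * bpart u ^ 3 : ℕ) : ℝ) ^ s ≤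
      (N : ℝ) * (Z₁ * Z₂) := by
    set F : (ℕ × ℕ) × ℕ → ℝ := fun x => ((x.1.1 ^ 2 * x.1.2 ^ 3 : ℕ) : ℝ) ^ s with hF
    set e : ℕ → (ℕ × ℕ) × ℕ := fun u => ((apart u, bpart u), wpart u) with he
    have hinj : Set.InjOn e (Finset.Ioc ⌊U⌋₊ N : Set ℕ) := by
      intro u1 h1 u2 h2 hee
      have e1 := (hu_facts u1 (by exact_mod_cast h1)).1
      have e2 := (hu_facts u2 (by exact_mod_cast h2)).1
      have d1 := decomp u1 e1
      have d2 := decomp u2 e2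
      rw [← d1, ← d2]
      simp only [he, Prod.mk.injEq] at hee
      rw [hee.1.1, hee.1.2, hee.2]
    have step1 : ∑ u ∈ Finset.Ioc ⌊U⌋₊ N, ((apart u ^ 2 * bpart u ^ 3 : ℕ) : ℝ) ^ s
        = ∑ x ∈ (Finset.Ioc ⌊U⌋₊ N).image e, F x := by
      rw [Finset.sum_image (fun x hx y hy h => hinj (by exact_mod_cast hx) (by exact_mod_cast hy) h)]
    have hsubset : (Finset.Ioc ⌊U⌋₊ N).image e ⊆
        ((A ×ˢ A) ×ˢ A).filter (fun x => x.1.1 ^ 2 * x.1.2 ^ 3 * x.2 ≤ N) := by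
      intro x hx
      obtain ⟨u, hu, rfl⟩ := Finset.mem_image.mp hx
      obtain ⟨hu0, hUu, huN⟩ := hu_facts u hu
      have hd := decomp u hu0
      have hup : 0 < u := Nat.pos_of_ne_zero hu0
      have hale : apart u ≤ u := Nat.le_of_dvd hup ⟨apart u * bpart u ^ 3 * wpart u, by
        conv_lhs => rw [← hd]
        ring⟩
      have hble : bpart u ≤ u := Nat.le_of_dvd hup ⟨bpart u ^ 2 * apart u ^ 2 * wpart u, by
        conv_lhs => rw [← hd]
        ring⟩
      have hwle : wpart u ≤ u := Nat.le_of_dvd hup ⟨apart u ^ 2 * bpart u ^ 3, hd.symm⟩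
      refine Finset.mem_filter.mpr ⟨?_, ?_⟩
      · simp only [Finset.mem_product, hA, Finset.mem_Icc]
        exact ⟨⟨⟨apart_pos u, le_trans hale huN⟩, ⟨bpart_pos u, le_trans hble huN⟩⟩,
          ⟨wpart_pos u, le_trans hwle huN⟩⟩
      · show apart u ^ 2 * bpart u ^ 3 * wpart u ≤ N
        calc apart u ^ 2 * bpart u ^ 3 * wpart u = u := by
              conv_rhs => rw [← hd]
              ring
          _ ≤ N := huN
    have hFnonneg : ∀ x, 0 ≤ F x := fun x => Real.rpow_nonneg (Nat.cast_nonneg _) _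
    have step2 : ∑ x ∈ (Finset.Ioc ⌊U⌋₊ N).image e, F x ≤
        ∑ x ∈ ((A ×ˢ A) ×ˢ A).filter (fun x => x.1.1 ^ 2 * x.1.2 ^ 3 * x.2 ≤ N), F x :=
      Finset.sum_le_sum_of_subset_of_nonneg hsubset (fun x _ _ => hFnonneg x)
    -- now bound the filtered sum
    have step3 : ∑ x ∈ ((A ×ˢ A) ×ˢ A).filter (fun x => x.1.1 ^ 2 * x.1.2 ^ 3 * x.2 ≤ N), F x ≤
        ∑ ab ∈ A ×ˢ A, (N : ℝ) * (((ab.1 : ℝ)) ^ q1 * ((ab.2 : ℝ)) ^ q2) := by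
      rw [Finset.sum_filter, Finset.sum_product]
      apply Finset.sum_le_sum
      intro ab hab
      obtain ⟨hab1, hab2⟩ := Finset.mem_product.mp hab
      have ha1 : 1 ≤ ab.1 := (Finset.mem_Icc.mp hab1).1
      have hb1 : 1 ≤ ab.2 := (Finset.mem_Icc.mp hab2).1
      set m : ℕ := ab.1 ^ 2 * ab.2 ^ 3 with hm
      have hmpos : 0 < m := Nat.mul_pos (pow_pos ha1 2) (pow_pos hb1 3)
      have hmr : (0:ℝ) < (m:ℝ) := by exact_mod_cast hmpos
      have hconst : ∀ c : ℕ, F ((ab.1, ab.2), c) = (m : ℝ) ^ s := by intro c; rfl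
      have inner_eq : ∑ c ∈ A, (if m * c ≤ N then F ((ab.1, ab.2), c) else 0)
          = (m : ℝ) ^ s * ((A.filter (fun c => m * c ≤ N)).card : ℝ) := by
        rw [← Finset.sum_filter, Finset.sum_congr rfl (fun c _ => hconst c),
          Finset.sum_const, nsmul_eq_mul, mul_comm]
      have hcard : ((A.filter (fun c => m * c ≤ N)).card : ℝ) ≤ (N : ℝ) / (m : ℝ) := by
        have hsub : A.filter (fun c => m * c ≤ N) ⊆ Finset.Icc 1 (N / m) := by
          intro c hc
          obtain ⟨hcA, hcN⟩ := Finset.mem_filter.mp hc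
          refine Finset.mem_Icc.mpr ⟨(Finset.mem_Icc.mp hcA).1, ?_⟩
          rw [Nat.le_div_iff_mul_le hmpos, mul_comm]
          exact hcN
        calc ((A.filter (fun c => m * c ≤ N)).card : ℝ)
            ≤ ((Finset.Icc 1 (N / m)).card : ℝ) := by exact_mod_cast Finset.card_le_card hsub
          _ = ((N / m : ℕ) : ℝ) := by rw [Nat.card_Icc]; norm_num
          _ ≤ (N : ℝ) / (m : ℝ) := Nat.cast_div_le
      have split_m : (m : ℝ) ^ (s - 1) = ((ab.1 : ℝ)) ^ q1 * ((ab.2 : ℝ)) ^ q2 := by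
        have : (m : ℝ) = ((ab.1 : ℝ)) ^ (2:ℕ) * ((ab.2 : ℝ)) ^ (3:ℕ) := by
          rw [hm]; push_cast; ring
        rw [this, Real.mul_rpow (by positivity) (by positivity),
          ← Real.rpow_natCast ((ab.1:ℝ)) 2, ← Real.rpow_natCast ((ab.2:ℝ)) 3,
          ← Real.rpow_mul (by positivity), ← Real.rpow_mul (by positivity), hq1, hq2]
        norm_num
      calc ∑ c ∈ A, (if m * c ≤ N then F ((ab.1, ab.2), c) else 0)
          = (m : ℝ) ^ s * ((A.filter (fun c => m * c ≤ N)).card : ℝ) := inner_eq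
        _ ≤ (m : ℝ) ^ s * ((N : ℝ) / (m : ℝ)) := by
            apply mul_le_mul_of_nonneg_left hcard (Real.rpow_nonneg hmr.le _)
        _ = (N : ℝ) * (m : ℝ) ^ (s - 1) := by
            conv_rhs => rw [Real.rpow_sub hmr, Real.rpow_one]
            ring
        _ = (N : ℝ) * (((ab.1 : ℝ)) ^ q1 * ((ab.2 : ℝ)) ^ q2) := by rw [split_m]
    have step4 : ∑ ab ∈ A ×ˢ A, (N : ℝ) * (((ab.1 : ℝ)) ^ q1 * ((ab.2 : ℝ)) ^ q2) ≤
        (N : ℝ) * (Z₁ * Z₂) := by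
      have heq : ∑ ab ∈ A ×ˢ A, (N : ℝ) * (((ab.1 : ℝ)) ^ q1 * ((ab.2 : ℝ)) ^ q2)
          = (N : ℝ) * ((∑ a ∈ A, (a:ℝ) ^ q1) * (∑ b ∈ A, (b:ℝ) ^ q2)) := by
        rw [Finset.sum_mul_sum, ← Finset.mul_sum, Finset.sum_product]
      rw [heq]
      have hS1 : ∑ a ∈ A, (a:ℝ) ^ q1 ≤ Z₁ :=
        Summable.sum_le_tsum A (fun a _ => Real.rpow_nonneg (Nat.cast_nonneg a) _) hsum1
      have hS2 : ∑ b ∈ A, (b:ℝ) ^ q2 ≤ Z₂ :=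
        Summable.sum_le_tsum A (fun b _ => Real.rpow_nonneg (Nat.cast_nonneg b) _) hsum2
      have hS1n : 0 ≤ ∑ a ∈ A, (a:ℝ) ^ q1 :=
        Finset.sum_nonneg fun a _ => Real.rpow_nonneg (Nat.cast_nonneg a) _
      have hS2n : 0 ≤ ∑ b ∈ A, (b:ℝ) ^ q2 :=
        Finset.sum_nonneg fun b _ => Real.rpow_nonneg (Nat.cast_nonneg b) _
      have : (∑ a ∈ A, (a:ℝ) ^ q1) * (∑ b ∈ A, (b:ℝ) ^ q2) ≤ Z₁ * Z₂ :=
        mul_le_mul hS1 hS2 hS2n hZ₁0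
      apply mul_le_mul_of_nonneg_left this (Nat.cast_nonneg N)
    calc ∑ u ∈ Finset.Ioc ⌊U⌋₊ N, ((apart u ^ 2 * bpart u ^ 3 : ℕ) : ℝ) ^ s
        = ∑ x ∈ (Finset.Ioc ⌊U⌋₊ N).image e, F x := step1
      _ ≤ _ := step2
      _ ≤ _ := step3
      _ ≤ (N : ℝ) * (Z₁ * Z₂) := step4
  -- put it together
  have hNle : (N : ℝ) ≤ 2 * U := Nat.floor_le (by linarith)
  have hUpow : U ^ (-s) * U = U ^ ((1:ℝ)/2 + ε) := by
    nth_rewrite 2 [← Real.rpow_one U]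
    rw [← Real.rpow_add hU0]
    congr 1
    rw [hsdef]; ring
  have hUpos : (0:ℝ) ≤ U ^ (-s) := Real.rpow_nonneg hU0.le _
  calc ∑ u ∈ Finset.Ioc ⌊U⌋₊ N, (wpart u : ℝ) ^ (-(1:ℝ)/2 + ε)
      ≤ ∑ u ∈ Finset.Ioc ⌊U⌋₊ N, U ^ (-s) * ((apart u ^ 2 * bpart u ^ 3 : ℕ) : ℝ) ^ s :=
        Finset.sum_le_sum key
    _ = U ^ (-s) * ∑ u ∈ Finset.Ioc ⌊U⌋₊ N, ((apart u ^ 2 * bpart u ^ 3 : ℕ) : ℝ) ^ s :=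
        (Finset.mul_sum _ _ _).symm
    _ ≤ U ^ (-s) * ((N : ℝ) * (Z₁ * Z₂)) := mul_le_mul_of_nonneg_left hsumF hUpos
    _ ≤ U ^ (-s) * ((2 * U) * (Z₁ * Z₂)) := by
        apply mul_le_mul_of_nonneg_left _ hUpos
        apply mul_le_mul_of_nonneg_right hNle (by positivity)
    _ = (2 * (Z₁ * Z₂)) * (U ^ (-s) * U) := by ring
    _ = (2 * (Z₁ * Z₂)) * U ^ ((1:ℝ)/2 + ε) := by rw [hUpow]
    _ ≤ (max 1 (2 * (Z₁ * Z₂))) * U ^ ((1:ℝ)/2 + ε) := by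
        apply mul_le_mul_of_nonneg_right (le_max_right _ _)
        exact Real.rpow_nonneg hU0.le _
end
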